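/- arXiv:1009.0562 — 4 statements merged into one kernel-verified Lean document; each statement's English description precedes it below -/
import Mathlib

section
/- For all real u > 1, the function g(u) = (1 - 1/u) * exp(2/(2u-1)) is strictly increasing in u. -/
theorem stmt_0 :
    StrictMonoOn (fun u : ℝ => (1 - 1 / u) * Real.exp (2 / (2 * u - 1)))
      (Set.Ioi (1 : ℝ)) := by
  have key : ∀ u : ℝ, u ∈ Set.Ioi (1:ℝ) →
      HasDerivAt (fun u : ℝ => (1 - 1 / u) * Real.exp (2 / (2 * u - 1)))
        (Real.exp (2 / (2 * u - 1)) / (u ^ 2 * (2 * u - 1) ^ 2)) u := by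
    intro u hu
    have hu1 : (1:ℝ) < u := hu
    have hu0 : u ≠ 0 := by linarith
    have hd : 2 * u - 1 ≠ 0 := by nlinarith
    have h1 : HasDerivAt (fun u : ℝ => 1 - 1 / u) (1 / u ^ 2) u := by
      simpa using (hasDerivAt_inv hu0).const_sub 1
    have hinner : HasDerivAt (fun u : ℝ => 2 * u - 1) 2 u := by
      simpa using ((hasDerivAt_id u).const_mul 2).sub_const 1
    have h2 : HasDerivAt (fun u : ℝ => 2 / (2 * u - 1))
        (2 * (-((2 * u - 1) ^ 2)⁻¹ * 2)) u := by
      simpa [div_eq_mul_inv] using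
        (((hasDerivAt_inv hd).comp u hinner).const_mul 2)
    have hexp : HasDerivAt (fun u : ℝ => Real.exp (2 / (2 * u - 1)))
        (Real.exp (2 / (2 * u - 1)) * (2 * (-((2 * u - 1) ^ 2)⁻¹ * 2))) u :=
      (Real.hasDerivAt_exp _).comp u h2
    have := h1.fun_mul hexp
    refine this.congr_deriv ?_
    have hd' : u * 2 - 1 ≠ 0 := by rwa [mul_comm]
    field_simp
    ring
  apply strictMonoOn_of_deriv_pos (convex_Ioi 1)
  · exact fun x hx => ((key x hx).continuousAt).continuousWithinAt
  · intro x hx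
    rw [interior_Ioi] at hx
    rw [(key x hx).deriv]
    have hx1 : (1:ℝ) < x := hx
    have : (0:ℝ) < x ^ 2 * (2 * x - 1) ^ 2 := by nlinarith
    exact div_pos (Real.exp_pos _) this
end

section
/- For all real u > 1, (1 - 1/u) * exp(2/(2u-1)) < 1. -/
open Real in
lemma key_exp_lt (x : ℝ) (hx0 : 0 < x) (hx2 : x < 2) :
    Real.exp x < (2 + x) / (2 - x) := by
  set g : ℝ → ℝ := fun y => Real.log (2 + y) - Real.log (2 - y) - y with hg
  have hmono : StrictMonoOn g (Set.Icc 0 x) := by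
    apply strictMonoOn_of_deriv_pos (convex_Icc 0 x)
    · apply ContinuousOn.sub
      apply ContinuousOn.sub
      · apply ContinuousOn.log (by fun_prop)
        intro y hy
        have := hy.1; nlinarith [hy.2]
      · apply ContinuousOn.log (by fun_prop)
        intro y hy
        have := hy.2; nlinarith
      · exact continuousOn_id
    · intro y hy
      rw [interior_Icc] at hy
      obtain ⟨hy0, hyx⟩ := hy
      have h2y : (2 : ℝ) + y ≠ 0 := by nlinarith
      have h2y' : (2 : ℝ) - y ≠ 0 := by nlinarith
      have d1 : HasDerivAt (fun y : ℝ => Real.log (2 + y)) (1 / (2 + y)) y := by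
        have : HasDerivAt (fun y : ℝ => 2 + y) 1 y :=
          (hasDerivAt_id y).const_add 2
        simpa using this.log h2y
      have d2 : HasDerivAt (fun y : ℝ => Real.log (2 - y)) (-1 / (2 - y)) y := by
        have : HasDerivAt (fun y : ℝ => 2 - y) (-1) y :=
          (hasDerivAt_id y).const_sub 2
        simpa using this.log h2y'
      have d : HasDerivAt g (1 / (2 + y) - -1 / (2 - y) - 1) y :=
        (d1.sub d2).sub (hasDerivAt_id y)
      rw [d.deriv]
      have hpos : (0:ℝ) < (2 + y) * (2 - y) := by nlinarith
      rw [div_sub_div _ _ h2y h2y', sub_pos]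
      rw [lt_div_iff₀ hpos]
      ring_nf
      nlinarith
  have h0 : g 0 < g x := by
    apply hmono (Set.left_mem_Icc.2 hx0.le) (Set.right_mem_Icc.2 hx0.le) hx0
  have hg0 : g 0 = 0 := by simp [hg]
  rw [hg0] at h0
  have hx' : x < Real.log (2 + x) - Real.log (2 - x) := by
    simp only [hg] at h0; linarith
  have h2x : (0:ℝ) < 2 + x := by linarith
  have h2x' : (0:ℝ) < 2 - x := by linarith
  calc Real.exp x < Real.exp (Real.log (2 + x) - Real.log (2 - x)) :=
        Real.exp_lt_exp.2 hx'
    _ = (2 + x) / (2 - x) := by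
        rw [Real.exp_sub, Real.exp_log h2x, Real.exp_log h2x']

theorem stmt_1 (u : ℝ) (hu : 1 < u) :
    (1 - 1 / u) * Real.exp (2 / (2 * u - 1)) < 1 := by
  have hu0 : (0:ℝ) < u := by linarith
  have h2u : (0:ℝ) < 2 * u - 1 := by linarith
  set x : ℝ := 2 / (2 * u - 1) with hx
  have hx0 : 0 < x := by positivity
  have hx2 : x < 2 := by
    rw [hx, div_lt_iff₀ h2u]; nlinarith
  have hrepr : 1 - 1 / u = (2 - x) / (2 + x) := by
    rw [hx]; have : u * 2 - 1 ≠ 0 := by linarith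
    have : 2 * u - 1 ≠ 0 := by linarith
    field_simp; ring
  have hkey := key_exp_lt x hx0 hx2
  rw [hrepr]
  have h2x : (0:ℝ) < 2 + x := by linarith
  have h2x' : (0:ℝ) < 2 - x := by linarith
  calc (2 - x) / (2 + x) * Real.exp x < (2 - x) / (2 + x) * ((2 + x) / (2 - x)) := by
        apply mul_lt_mul_of_pos_left hkey (by positivity)
    _ = 1 := by field_simp
end

section
/- Let X be a chi-squared random variable with ℓ ≥ 3 degrees of freedom. Then for every t with 0 < t < ℓ - 2, P(X ≤ t) ≤ P(X ≥ 2ℓ - 4 - t). -/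
open MeasureTheory ProbabilityTheory

/-- Key analytic inequality: for `0 < x ≤ m`,
`0 ≤ m/2 * (log (2m - x) - log x) + x - m`. -/
lemma aux_log_ineq {m x : ℝ} (hm : 0 < m) (hx : 0 < x) (hxm : x ≤ m) :
    0 ≤ m / 2 * (Real.log (2 * m - x) - Real.log x) + x - m := by
  set h : ℝ → ℝ := fun s => m / 2 * (Real.log (2 * m - s) - Real.log s) + s with hh
  have hder : ∀ s : ℝ, 0 < s → s < 2 * m →
      HasDerivAt h (m / 2 * (-(2 * m - s)⁻¹ - s⁻¹) + 1) s := by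
    intro s hs hs2
    have hne : 2 * m - s ≠ 0 := by linarith
    have h1 : HasDerivAt (fun s => Real.log (2 * m - s)) (-(2 * m - s)⁻¹) s := by
      have := (Real.hasDerivAt_log hne).comp s
        ((hasDerivAt_const s (2 * m)).sub (hasDerivAt_id s))
      simp at this; exact this
    have h2 : HasDerivAt Real.log s⁻¹ s := Real.hasDerivAt_log hs.ne'
    have := ((h1.sub h2).const_mul (m / 2)).add (hasDerivAt_id s)
    simp at this; exact this
  have hanti : AntitoneOn h (Set.Icc x m) := by
    apply antitoneOn_of_deriv_nonpos (convex_Icc x m)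
    · intro s hs
      exact (hder s (lt_of_lt_of_le hx hs.1) (by rcases hs with ⟨_, h2⟩; linarith)).continuousAt.continuousWithinAt
    · intro s hs
      rw [interior_Icc] at hs
      exact (hder s (lt_trans hx hs.1) (by rcases hs with ⟨_, h2⟩; linarith)).differentiableAt.differentiableWithinAt
    · intro s hs
      rw [interior_Icc] at hs
      have hs1 : 0 < s := lt_trans hx hs.1
      have hs2 : s < 2 * m := by rcases hs with ⟨_, h2⟩; linarith
      rw [(hder s hs1 hs2).deriv]
      have hpos : 0 < s * (2 * m - s) := by nlinarith
      have hne2 : 2 * m - s ≠ 0 := by intro hcon; nlinarith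
      have e2 : m / 2 * (-(2 * m - s)⁻¹ - s⁻¹) + 1
          = 1 - m * m / (s * (2 * m - s)) := by
        rw [div_eq_mul_inv (m * m), mul_inv]
        linear_combination (m / 2 * (2 * m - s)⁻¹) * (inv_mul_cancel₀ hs1.ne') + (m / 2 * s⁻¹) * (inv_mul_cancel₀ hne2)
      rw [e2, sub_nonpos, le_div_iff₀ hpos]
      nlinarith [sq_nonneg (m - s)]
  have hxmem : x ∈ Set.Icc x m := ⟨le_rfl, hxm⟩
  have hmmem : m ∈ Set.Icc x m := ⟨hxm, le_rfl⟩
  have := hanti hxmem hmmem hxm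
  have hhm : h m = m := by
    simp only [hh]
    have : 2 * m - m = m := by ring
    rw [this, sub_self, mul_zero, zero_add]
  rw [hhm] at this
  simpa [hh] using sub_nonneg.mpr this

/-- Pointwise density comparison. -/
lemma aux_rpow_ineq {m x : ℝ} (hm : 0 < m) (hx : 0 < x) (hxm : x ≤ m) :
    x ^ (m / 2) * Real.exp (-(x / 2)) ≤
      (2 * m - x) ^ (m / 2) * Real.exp (-((2 * m - x) / 2)) := by
  have h2 : 0 < 2 * m - x := by linarith
  rw [Real.rpow_def_of_pos hx, Real.rpow_def_of_pos h2, ← Real.exp_add, ← Real.exp_add,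
    Real.exp_le_exp]
  have := aux_log_ineq hm hx hxm
  nlinarith [this]

theorem stmt_2 (ℓ : ℕ) (hℓ : 3 ≤ ℓ) (t : ℝ) (ht : 0 < t) (ht' : t < (ℓ : ℝ) - 2) :
    gammaMeasure ((ℓ : ℝ) / 2) (1 / 2) {x | x ≤ t} ≤
      gammaMeasure ((ℓ : ℝ) / 2) (1 / 2) {x | 2 * (ℓ : ℝ) - 4 - t ≤ x} := by
  set a : ℝ := (ℓ : ℝ) / 2 with ha
  set m : ℝ := (ℓ : ℝ) - 2 with hmdef
  have hl3 : (3 : ℝ) ≤ (ℓ : ℝ) := by exact_mod_cast hℓ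
  have hm : 0 < m := by simp only [hmdef]; linarith
  have htm : t < m := ht'
  have ham : a - 1 = m / 2 := by simp only [ha, hmdef]; ring
  have hc : 2 * (ℓ : ℝ) - 4 = 2 * m := by simp only [hmdef]; ring
  set c : ℝ := 2 * m with hcdef
  have hset1 : {x : ℝ | x ≤ t} = Set.Iic t := rfl
  have hset2 : {x : ℝ | 2 * (ℓ : ℝ) - 4 - t ≤ x} = Set.Ici (c - t) := by
    rw [hc]
    rfl
  rw [hset1, hset2, gammaMeasure, withDensity_apply _ measurableSet_Iic,
    withDensity_apply _ measurableSet_Ici]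
  have hfm : Measurable (gammaPDF a (1/2)) :=
    (measurable_gammaPDFReal a (1/2)).ennreal_ofReal
  -- Step 1: left side equals integral over Icc 0 t
  rw [lintegral_Iic_eq_lintegral_Iio_add_Icc _ ht.le (z := 0),
    lintegral_gammaPDF_of_nonpos le_rfl, zero_add]
  -- Step 2: pointwise bound and reflection
  have step1 : ∫⁻ x in Set.Icc 0 t, gammaPDF a (1/2) x ≤
      ∫⁻ x in Set.Icc 0 t, gammaPDF a (1/2) (c - x) := by
    apply setLIntegral_mono (hfm.comp (measurable_const.sub measurable_id))
    intro x hx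
    simp only [Function.comp_apply, id_eq, Pi.sub_apply]
    rcases eq_or_lt_of_le hx.1 with h0 | h0
    · -- x = 0 : density is 0
      rw [← h0, gammaPDF_of_nonneg le_rfl]
      have : (0:ℝ) ^ (a - 1) = 0 := by
        rw [Real.zero_rpow]
        rw [ham]; positivity
      simp [this]
    · -- 0 < x
      have hxm : x ≤ m := le_of_lt (lt_of_le_of_lt hx.2 htm)
      have hcx : 0 ≤ c - x := by simp only [hcdef]; linarith
      rw [gammaPDF_of_nonneg h0.le, gammaPDF_of_nonneg hcx]
      apply ENNReal.ofReal_le_ofReal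
      have hcoef : (0:ℝ) ≤ (1/2:ℝ) ^ a / Real.Gamma a := by
        have hga : 0 < Real.Gamma a := Real.Gamma_pos_of_pos (by simp only [ha]; linarith)
        positivity
      rw [mul_assoc, mul_assoc]
      apply mul_le_mul_of_nonneg_left _ hcoef
      have key := aux_rpow_ineq hm h0 hxm
      rw [ham]
      have e1 : -(1/2 * x) = -(x/2) := by ring
      have e2 : -(1/2 * (c - x)) = -((2*m - x)/2) := by simp only [hcdef]; ring
      have e3 : c - x = 2 * m - x := by rw [hcdef]
      rw [e1, e3, e2]
      exact key
  have step2 : ∫⁻ x in Set.Icc 0 t, gammaPDF a (1/2) (c - x) =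
      ∫⁻ y in Set.Icc (c - t) c, gammaPDF a (1/2) y := by
    have hpre : (fun x : ℝ => c - x) ⁻¹' Set.Icc (c - t) c = Set.Icc 0 t := by
      ext x
      simp only [Set.mem_preimage, Set.mem_Icc]
      constructor <;> intro h <;> constructor <;> linarith [h.1, h.2]
    rw [← hpre]
    exact (Measure.measurePreserving_sub_left volume c).setLIntegral_comp_preimage
      measurableSet_Icc hfm
  have step3 : ∫⁻ y in Set.Icc (c - t) c, gammaPDF a (1/2) y ≤
      ∫⁻ y in Set.Ici (c - t), gammaPDF a (1/2) y :=
    lintegral_mono_set Set.Icc_subset_Ici_self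
  exact le_trans step1 (le_trans (le_of_eq step2) step3)
end

section
/- Let f be the density of a chi-squared distribution with ℓ ≥ 3 degrees of freedom. Then for all s with 0 < s < ℓ - 2, f(s) ≤ f(2ℓ - 4 - s). -/
lemma key_log_ineq (u : ℝ) (hu0 : 0 < u) (hu1 : u < 1) :
    2 - 2*u ≤ Real.log (2-u) - Real.log u := by
  set h : ℝ → ℝ := fun x => Real.log (2-x) - Real.log x + 2*x with hh
  have hd : ∀ x ∈ Set.Ioo u 1, HasDerivAt h (-(1/(2-x)) - 1/x + 2) x := by
    intro x hx
    have hx0 : 0 < x := lt_trans hu0 hx.1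
    have hx2 : x < 2 := lt_trans hx.2 (by norm_num)
    have h1 : HasDerivAt (fun x : ℝ => Real.log (2-x)) (-(1/(2-x))) x := by
      have := (Real.hasDerivAt_log (by linarith : (2:ℝ)-x ≠ 0)).comp x
        ((hasDerivAt_id x).const_sub 2)
      simpa [Function.comp_def] using this
    have h2 : HasDerivAt (fun x : ℝ => Real.log x) (1/x) x := by
      simpa [one_div] using Real.hasDerivAt_log (ne_of_gt hx0)
    have h3 : HasDerivAt (fun x : ℝ => 2*x) 2 x := by
      simpa using (hasDerivAt_id x).const_mul 2
    exact (h1.sub h2).add h3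
  have hcont : ContinuousOn h (Set.Icc u 1) := by
    apply continuousOn_of_forall_continuousAt
    intro x hx
    have hx0 : 0 < x := lt_of_lt_of_le hu0 hx.1
    have hx2 : x < 2 := lt_of_le_of_lt hx.2 (by norm_num)
    have c1 : ContinuousAt (fun x : ℝ => Real.log (2-x)) x :=
      (Real.continuousAt_log (by linarith : (2:ℝ)-x ≠ 0)).comp
        ((continuous_const.sub continuous_id).continuousAt)
    have c2 : ContinuousAt (fun x : ℝ => Real.log x) x :=
      Real.continuousAt_log (ne_of_gt hx0)
    exact (c1.sub c2).add ((continuous_const.mul continuous_id).continuousAt)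
  have hanti : StrictAntiOn h (Set.Icc u 1) := by
    apply strictAntiOn_of_deriv_neg (convex_Icc u 1) hcont
    intro x hx
    rw [interior_Icc] at hx
    rw [(hd x hx).deriv]
    have hx0 : 0 < x := lt_trans hu0 hx.1
    have hx2 : x < 2 := lt_trans hx.2 (by norm_num)
    have h1 : (0:ℝ) < 2 - x := by linarith
    have key : x * (2-x) < 1 := by nlinarith [sq_nonneg (1-x), hx.2]
    have : 2 < 1/(2-x) + 1/x := by
      rw [div_add_div _ _ (ne_of_gt h1) (ne_of_gt hx0), lt_div_iff₀ (by positivity)]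
      nlinarith
    linarith
  have h1mem : (1:ℝ) ∈ Set.Icc u 1 := ⟨le_of_lt hu1, le_refl 1⟩
  have humem : u ∈ Set.Icc u 1 := ⟨le_refl u, le_of_lt hu1⟩
  have := hanti humem h1mem hu1
  simp only [hh] at this
  norm_num at this
  linarith

/-- The density of the chi-squared distribution with `ℓ` degrees of freedom. -/
noncomputable def chiSqPDF (ℓ : ℕ) (s : ℝ) : ℝ :=
  s ^ ((ℓ : ℝ) / 2 - 1) * Real.exp (-s / 2) /
    (2 ^ ((ℓ : ℝ) / 2) * Real.Gamma ((ℓ : ℝ) / 2))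

theorem stmt_3 (ℓ : ℕ) (hℓ : 3 ≤ ℓ) (s : ℝ) (hs : 0 < s) (hs' : s < (ℓ : ℝ) - 2) :
    chiSqPDF ℓ s ≤ chiSqPDF ℓ (2 * (ℓ : ℝ) - 4 - s) := by
  have hl3 : (3:ℝ) ≤ (ℓ:ℝ) := by exact_mod_cast hℓ
  set a : ℝ := (ℓ:ℝ)/2 - 1 with ha
  have ha0 : 0 < a := by simp [ha]; linarith
  set u : ℝ := s / (2*a) with hu
  have hu0 : 0 < u := by positivity
  have h2a : 2*a = (ℓ:ℝ) - 2 := by rw [ha]; ring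
  have hu1 : u < 1 := by
    rw [hu, div_lt_one (by positivity)]
    linarith
  set t : ℝ := 2 * (ℓ:ℝ) - 4 - s with hts
  have hseq : s = (2*a) * u := by rw [hu]; field_simp [ha0.ne']
  have hteq : t = (2*a) * (2 - u) := by
    rw [hts, hseq, ha]; ring
  have ht0 : 0 < t := by
    rw [hteq]; exact mul_pos (by positivity) (by linarith)
  have hD : 0 < 2 ^ ((ℓ : ℝ) / 2) * Real.Gamma ((ℓ : ℝ) / 2) := by
    have : 0 < Real.Gamma ((ℓ : ℝ) / 2) := Real.Gamma_pos_of_pos (by linarith)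
    positivity
  unfold chiSqPDF
  rw [div_le_div_iff_of_pos_right hD]
  have hp : (ℓ:ℝ)/2 - 1 = a := rfl
  rw [hp, Real.rpow_def_of_pos hs, Real.rpow_def_of_pos ht0,
    ← Real.exp_add, ← Real.exp_add, Real.exp_le_exp]
  have hkey := key_log_ineq u hu0 hu1
  have hls : Real.log s = Real.log (2*a) + Real.log u := by
    rw [hseq, Real.log_mul (by positivity) (ne_of_gt hu0)]
  have hlt : Real.log t = Real.log (2*a) + Real.log (2-u) := by
    rw [hteq, Real.log_mul (by positivity) (by linarith : (2:ℝ)-u ≠ 0)]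
  have hlog : 2 - 2*u ≤ Real.log t - Real.log s := by
    rw [hls, hlt]; linarith
  have hst : t - s = (2*a) * (2 - 2*u) := by rw [hteq, hseq]; ring
  nlinarith [mul_le_mul_of_nonneg_left hlog (le_of_lt ha0)]
end
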